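/- Let k be a graded field (a G-graded commutative ring in which every nonzero homogeneous element is invertible) and g ∈ G. In the graded polynomial ring k[g⁻¹T] (the ring k[T] where T is declared homogeneous of degree g), Euclidean division holds for homogeneous elements: for homogeneous A, B ∈ k[g⁻¹T] with B ≠ 0, there exists a unique pair (Q, R) of homogeneous elements with A = BQ + R and deg(R) < deg(B). -/

import Mathlib

open Polynomial

/-- A polynomial `P = Σ a_n T^n` over a `G`-graded ring `k` is homogeneous in
`k[g⁻¹T]` (where `T` has degree `g`) if, for some `h : G`, each nonzero coefficient
`a_n` is homogeneous of degree `h - n • g`. -/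
def GradedHomog {G : Type*} [AddCommGroup G] {k : Type*} [CommRing k]
    (𝒜 : G → AddSubgroup k) (g : G) (P : Polynomial k) : Prop :=
  ∃ h : G, ∀ n : ℕ, P.coeff n ≠ 0 → P.coeff n ∈ 𝒜 (h - (n : ℤ) • g)

/-- Build a polynomial by transforming each coefficient. -/
lemma mapCoeff_exists {k : Type*} [CommRing k] (f : ℕ → k → k) (hf : ∀ n, f n 0 = 0)
    (P : Polynomial k) : ∃ P' : Polynomial k, ∀ n, P'.coeff n = f n (P.coeff n) := by
  refine ⟨⟨⟨Finsupp.onFinset P.support (fun n => f n (P.coeff n)) ?_⟩⟩, fun n => rfl⟩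
  intro n hn
  by_contra h
  refine hn ?_
  show f n (P.coeff n) = 0
  rw [Polynomial.notMem_support_iff.mp h, hf]

/-- Uniqueness of quotient and remainder when the leading coefficient of the divisor is a
unit. -/
lemma uniq_divmod {k : Type*} [CommRing k] {B Q1 R1 Q2 R2 : Polynomial k}
    (hu : IsUnit B.leadingCoeff)
    (h : B * Q1 + R1 = B * Q2 + R2) (d1 : R1.degree < B.degree) (d2 : R2.degree < B.degree) :
    Q1 = Q2 ∧ R1 = R2 := by
  have hQ : B * (Q1 - Q2) = R2 - R1 := by ring_nf; linear_combination h
  have hQeq : Q1 = Q2 := by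
    by_contra hne
    have hsub : Q1 - Q2 ≠ 0 := sub_ne_zero.mpr hne
    have hlc : B.leadingCoeff * (Q1 - Q2).leadingCoeff ≠ 0 := by
      intro h0
      exact (Polynomial.leadingCoeff_ne_zero.mpr hsub) (by
        simpa using (hu.mul_right_eq_zero).mp h0)
    have hdeg : (B * (Q1 - Q2)).degree = B.degree + (Q1 - Q2).degree :=
      Polynomial.degree_mul' hlc
    have hge : B.degree ≤ (B * (Q1 - Q2)).degree := by
      rw [hdeg]
      conv_lhs => rw [← add_zero B.degree]
      exact add_le_add_right (Polynomial.zero_le_degree_iff.mpr hsub) _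
    have hlt : (R2 - R1).degree < B.degree :=
      lt_of_le_of_lt (Polynomial.degree_sub_le _ _) (max_lt d2 d1)
    rw [hQ] at hge
    exact absurd (lt_of_le_of_lt hge hlt) (lt_irrefl _)
  refine ⟨hQeq, ?_⟩
  rw [hQeq] at h
  exact add_left_cancel h

/-- Euclidean division of homogeneous polynomials over a graded field. -/
theorem stmt3 {G : Type*} [AddCommGroup G] [DecidableEq G] {k : Type*} [CommRing k] [Nontrivial k]
    (𝒜 : G → AddSubgroup k) [GradedRing 𝒜]
    -- `k` is a graded field: every nonzero homogeneous element is invertible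
    (hfield : ∀ (x : k) (g' : G), x ∈ 𝒜 g' → x ≠ 0 → IsUnit x)
    (g : G) (A B : Polynomial k)
    (hA : GradedHomog 𝒜 g A) (hB : GradedHomog 𝒜 g B) (hB0 : B ≠ 0) :
    ∃! QR : Polynomial k × Polynomial k,
      GradedHomog 𝒜 g QR.1 ∧ GradedHomog 𝒜 g QR.2 ∧
        A = B * QR.1 + QR.2 ∧ QR.2.degree < B.degree := by
  classical
  obtain ⟨a, ha⟩ := hA
  obtain ⟨b, hb⟩ := hB
  -- the leading coefficient of B is a unit
  have hlB : B.leadingCoeff ≠ 0 := Polynomial.leadingCoeff_ne_zero.mpr hB0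
  have hu : IsUnit B.leadingCoeff :=
    hfield _ _ (hb B.natDegree hlB) hlB
  -- make B monic by scaling
  set c : kˣ := hu.unit⁻¹ with hc
  have hcB : (c : k) * B.leadingCoeff = 1 := by
    rw [hc]; exact Units.inv_mul_of_eq rfl
  set B' : Polynomial k := Polynomial.C (c : k) * B with hB'
  have hmon : B'.Monic := by
    have h1 : (Polynomial.C (c : k)).leadingCoeff * B.leadingCoeff ≠ 0 := by
      rw [Polynomial.leadingCoeff_C, hcB]; exact one_ne_zero
    unfold Polynomial.Monic
    rw [hB', Polynomial.leadingCoeff_mul' h1, Polynomial.leadingCoeff_C, hcB]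
  have hdegB' : B'.degree = B.degree := by
    have h1 : (Polynomial.C (c : k)).leadingCoeff * B.leadingCoeff ≠ 0 := by
      rw [Polynomial.leadingCoeff_C, hcB]; exact one_ne_zero
    rw [hB', Polynomial.degree_mul' h1, Polynomial.degree_C c.ne_zero, zero_add]
  -- divide
  set Q : Polynomial k := Polynomial.C (c : k) * (A /ₘ B') with hQdef
  set R : Polynomial k := A %ₘ B' with hRdef
  have hdiv : A = B * Q + R :=
    calc A = A %ₘ B' + B' * (A /ₘ B') := (Polynomial.modByMonic_add_div A B').symm
      _ = B * Q + R := by rw [hQdef, hRdef, hB']; ring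
  have hdegR : R.degree < B.degree := by
    rw [← hdegB']; exact Polynomial.degree_modByMonic_lt A hmon
  -- project Q and R onto the right homogeneous components
  obtain ⟨Q', hQ'⟩ := mapCoeff_exists
    (fun n x => (GradedRing.proj 𝒜 (a - b - (n : ℤ) • g)) x) (fun n => map_zero _) Q
  obtain ⟨R', hR'⟩ := mapCoeff_exists
    (fun n x => (GradedRing.proj 𝒜 (a - (n : ℤ) • g)) x) (fun n => map_zero _) R
  -- key coefficientwise identity
  have hkey : A = B * Q' + R' := by
    ext n
    have hAn : A.coeff n = (GradedRing.proj 𝒜 (a - (n : ℤ) • g)) (A.coeff n) := by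
      by_cases h0 : A.coeff n = 0
      · rw [h0, map_zero]
      · rw [GradedRing.proj_apply, DirectSum.decompose_of_mem_same 𝒜 (ha n h0)]
    have hsplit : (GradedRing.proj 𝒜 (a - (n : ℤ) • g)) ((B * Q).coeff n)
        = (B * Q').coeff n := by
      rw [Polynomial.coeff_mul, Polynomial.coeff_mul, map_sum]
      apply Finset.sum_congr rfl
      intro p hp
      have hpn : p.1 + p.2 = n := Finset.HasAntidiagonal.mem_antidiagonal.mp hp
      by_cases hBp : B.coeff p.1 = 0
      · rw [hBp, zero_mul, map_zero, zero_mul]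
      · have hmem : B.coeff p.1 ∈ 𝒜 (b - (p.1 : ℤ) • g) := hb p.1 hBp
        have hidx : (b - (p.1 : ℤ) • g) + (a - b - (p.2 : ℤ) • g) = a - (n : ℤ) • g := by
          rw [← hpn]
          push_cast
          rw [add_smul]
          abel
        rw [GradedRing.proj_apply, ← hidx,
          DirectSum.coe_decompose_mul_add_of_left_mem 𝒜 hmem, hQ' p.2,
          GradedRing.proj_apply]
    calc A.coeff n = (GradedRing.proj 𝒜 (a - (n : ℤ) • g)) (A.coeff n) := hAn
      _ = (GradedRing.proj 𝒜 (a - (n : ℤ) • g)) ((B * Q).coeff n + R.coeff n) := by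
          rw [hdiv]; rw [Polynomial.coeff_add]
      _ = (B * Q').coeff n + R'.coeff n := by
          rw [map_add, hsplit, hR' n]
      _ = (B * Q' + R').coeff n := (Polynomial.coeff_add _ _ _).symm
  have hdegR' : R'.degree < B.degree := by
    refine lt_of_le_of_lt ?_ hdegR
    rw [Polynomial.degree_le_iff_coeff_zero]
    intro m hm
    rw [hR' m, Polynomial.coeff_eq_zero_of_degree_lt hm, map_zero]
  refine ⟨(Q', R'), ⟨⟨a - b, fun n _ => ?_⟩, ⟨a, fun n _ => ?_⟩, hkey, hdegR'⟩, ?_⟩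
  · rw [hQ' n, GradedRing.proj_apply]
    exact SetLike.coe_mem _
  · rw [hR' n, GradedRing.proj_apply]
    exact SetLike.coe_mem _
  · rintro ⟨Q2, R2⟩ ⟨-, -, heq2, hdeg2⟩
    have := uniq_divmod hu (heq2 ▸ hkey ▸ rfl : B * Q2 + R2 = B * Q' + R') hdeg2 hdegR'
    exact Prod.ext this.1 this.2
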